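/- Let d ≥ 1, let ξ ∈ ℝ^d be a unit vector, let μ ∈ ℝ with μ ≠ 0, let g : ℝ → ℝ be smooth, and let h : ℝ^d → ℝ be smooth with ∇h(x)·ξ = 0 for every x ∈ ℝ^d. Define W : ℝ × ℝ^d → ℝ^d by W(t,x) = g(x·ξ + μt) h(x) ξ. Then for every (t,x) and every index i, Σ_{j=1}^d ∂_{x_j}(W_i W_j)(t,x) = μ^{−1} ∂_t [ g(x·ξ + μt)² h(x)² ] ξ_i; that is, div_x(W ⊗ W) = μ^{−1} ∂_t ( g(·ξ + μ·)² h² ξ ). -/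

import Mathlib

open scoped BigOperators

/-- The self-interaction of an intermittent jet is a time derivative:
for `W(t,x) = g(x·ξ + μt) h(x) ξ` with `ξ` a unit vector, `g, h` smooth and
`∇h · ξ = 0`, one has `div_x (W ⊗ W) = μ⁻¹ ∂_t (g(x·ξ + μt)² h(x)² ξ)`. -/
theorem jet_div_eq_time_deriv (d : ℕ) (hd : 1 ≤ d)
    (ξ : Fin d → ℝ) (hξ : ∑ i, ξ i ^ 2 = 1)
    (μ : ℝ) (hμ : μ ≠ 0)
    (g : ℝ → ℝ) (hg : ContDiff ℝ (⊤ : ℕ∞) g)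
    (h : (Fin d → ℝ) → ℝ) (hh : ContDiff ℝ (⊤ : ℕ∞) h)
    (hperp : ∀ x : Fin d → ℝ, fderiv ℝ h x ξ = 0)
    (W : ℝ → (Fin d → ℝ) → Fin d → ℝ)
    (hW : ∀ t x i, W t x i = g ((∑ k, x k * ξ k) + μ * t) * h x * ξ i) :
    ∀ (t : ℝ) (x : Fin d → ℝ) (i : Fin d),
      ∑ j, fderiv ℝ (fun y => W t y i * W t y j) x (Pi.single j 1)
        = μ⁻¹ * deriv (fun s => g ((∑ k, x k * ξ k) + μ * s) ^ 2 * h x ^ 2) t * ξ i := by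
  intro t x i
  -- the linear form y ↦ ∑ y k * ξ k
  set L : (Fin d → ℝ) →L[ℝ] ℝ :=
    ∑ k, (ξ k) • (ContinuousLinearMap.proj k : (Fin d → ℝ) →L[ℝ] ℝ) with hLdef
  have hLapp : ∀ y : Fin d → ℝ, L y = ∑ k, y k * ξ k := by
    intro y
    simp [hLdef, ContinuousLinearMap.sum_apply, mul_comm]
  set a : ℝ := (∑ k, x k * ξ k) + μ * t with ha
  have hgd : HasDerivAt g (deriv g a) a :=
    ((hg.differentiable (by simp)) a).hasDerivAt
  have hlin : HasFDerivAt (fun y : Fin d → ℝ => (∑ k, y k * ξ k) + μ * t) (L : _) x := by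
    have : (fun y : Fin d → ℝ => (∑ k, y k * ξ k) + μ * t) = fun y => L y + μ * t := by
      funext y; rw [hLapp]
    rw [this]
    simpa using (L.hasFDerivAt (x := x)).add_const (μ * t)
  have hLx : L x = ∑ k, x k * ξ k := hLapp x
  have hG : HasFDerivAt (fun y : Fin d → ℝ => g ((∑ k, y k * ξ k) + μ * t))
      (deriv g a • (L : (Fin d → ℝ) →L[ℝ] ℝ)) x := by
    exact hgd.comp_hasFDerivAt x hlin
  have hH : HasFDerivAt h (fderiv ℝ h x) x := ((hh.differentiable (by simp)) x).hasFDerivAt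
  set D : (Fin d → ℝ) →L[ℝ] ℝ :=
    g ((∑ k, x k * ξ k) + μ * t) • fderiv ℝ h x + h x • (deriv g a • L) with hDdef
  have hGh : HasFDerivAt (fun y : Fin d → ℝ => g ((∑ k, y k * ξ k) + μ * t) * h y) D x :=
    hG.mul hH
  set Gx : ℝ := g a * h x with hGx
  -- value of each divergence term
  have key : ∀ j, fderiv ℝ (fun y => W t y i * W t y j) x (Pi.single j 1)
      = ξ i * ξ j * (2 * Gx * D (Pi.single j 1)) := by
    intro j
    have h1 : (fun y => W t y i * W t y j)
        = fun y => (ξ i * ξ j) *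
            ((g ((∑ k, y k * ξ k) + μ * t) * h y) * (g ((∑ k, y k * ξ k) + μ * t) * h y)) := by
      funext y; rw [hW, hW]; ring
    rw [h1]
    have h2 := ((hGh.mul hGh).const_mul (ξ i * ξ j)).fderiv
    simp only [Pi.mul_apply] at h2
    rw [h2]
    simp only [ContinuousLinearMap.coe_smul', Pi.smul_apply, ContinuousLinearMap.add_apply,
      smul_eq_mul, ha, hGx]
    ring
  -- D evaluated at single j 1
  have hDval : ∀ j, D (Pi.single j 1)
      = g a * (fderiv ℝ h x (Pi.single j 1)) + h x * (deriv g a * ξ j) := by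
    intro j
    have hLj : L (Pi.single j 1) = ξ j := by
      rw [hLapp]
      simp [Pi.single_apply]
    simp only [hDdef, ContinuousLinearMap.add_apply, ContinuousLinearMap.coe_smul',
      Pi.smul_apply, smul_eq_mul, hLj, ha]
  -- ∑ j, ξ j * ∂_j h = ∇h · ξ = 0
  have hsum1 : ∑ j, ξ j * fderiv ℝ h x (Pi.single j 1) = 0 := by
    have hxsum : (ξ : Fin d → ℝ) = ∑ j, ξ j • (Pi.single j (1 : ℝ) : Fin d → ℝ) := by
      funext m
      simp [Pi.single_apply, eq_comm]
    calc ∑ j, ξ j * fderiv ℝ h x (Pi.single j 1)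
        = fderiv ℝ h x (∑ j, ξ j • (Pi.single j (1 : ℝ) : Fin d → ℝ)) := by
          rw [map_sum]
          exact Finset.sum_congr rfl fun j _ => by simp
      _ = fderiv ℝ h x ξ := by rw [← hxsum]
      _ = 0 := hperp x
  simp only [key, hDval]
  have hsplit : ∑ j, ξ i * ξ j * (2 * Gx *
        (g a * (fderiv ℝ h x (Pi.single j 1)) + h x * (deriv g a * ξ j)))
      = (ξ i * 2 * Gx * g a) * (∑ j, ξ j * fderiv ℝ h x (Pi.single j 1))
        + (ξ i * 2 * Gx * h x * deriv g a) * (∑ j, ξ j ^ 2) := by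
    rw [Finset.mul_sum, Finset.mul_sum, ← Finset.sum_add_distrib]
    exact Finset.sum_congr rfl fun j _ => by ring
  rw [hsplit, hsum1, hξ]
  -- compute the time derivative
  have h1 : HasDerivAt (fun s : ℝ => (∑ k, x k * ξ k) + μ * s) μ t := by
    simpa using ((hasDerivAt_id t).const_mul μ).const_add (∑ k, x k * ξ k)
  have h2 : HasDerivAt (fun s : ℝ => g ((∑ k, x k * ξ k) + μ * s)) (deriv g a * μ) t :=
    hgd.comp t h1
  have h3 : deriv (fun s : ℝ => g ((∑ k, x k * ξ k) + μ * s) ^ 2 * h x ^ 2) t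
      = (2 * g a ^ 1 * (deriv g a * μ)) * h x ^ 2 := by
    have := ((h2.pow 2).mul_const (h x ^ 2)).deriv
    simpa [ha] using this
  rw [h3]
  field_simp [hGx]
  ring
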